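/- Let λ > 0, α ∈ (1/2, 1), and e₀ ≠ 0. Let e : [0, ∞) → ℝ be differentiable with e(0) = e₀ and e′(t) = −λ |e(t)|^α sign(e(t)) for all t ≥ 0. Then e(t) ≠ 0 for all t ∈ [0, t_f) and e(t_f) = 0, where t_f := λ⁻¹(1−α)⁻¹ |e₀|^{1−α}; that is, t_f is exactly the first time the trajectory reaches zero. -/

import Mathlib

open Set Filter Topology

lemma tsm_aux
    (lam α e₀ : ℝ) (hlam : 0 < lam) (hα : α ∈ Set.Ioo (1 / 2 : ℝ) 1)
    (he₀ : 0 < e₀)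
    (e : ℝ → ℝ) (hinit : e 0 = e₀)
    (hode : ∀ t : ℝ, 0 ≤ t →
      HasDerivAt e (-lam * |e t| ^ α * Real.sign (e t)) t) :
    (∀ t : ℝ, t ∈ Set.Ico 0 (lam⁻¹ * (1 - α)⁻¹ * |e₀| ^ (1 - α)) → 0 < e t) ∧
    e (lam⁻¹ * (1 - α)⁻¹ * |e₀| ^ (1 - α)) = 0 := by
  obtain ⟨hα1, hα2⟩ := hα
  have h1α : (0:ℝ) < 1 - α := by linarith
  have habs : |e₀| = e₀ := abs_of_pos he₀
  set c : ℝ := lam * (1 - α) with hc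
  have hcpos : 0 < c := mul_pos hlam h1α
  set tf : ℝ := lam⁻¹ * (1 - α)⁻¹ * |e₀| ^ (1 - α) with htf
  have htfpos : 0 < tf := by
    apply mul_pos (mul_pos (inv_pos.2 hlam) (inv_pos.2 h1α))
    exact Real.rpow_pos_of_pos (abs_pos.2 he₀.ne') _
  have hctf : c * tf = e₀ ^ (1 - α) := by
    rw [htf, hc, habs]
    field_simp
  -- continuity of e at nonneg points
  have hcont : ∀ t : ℝ, 0 ≤ t → ContinuousAt e t := fun t ht =>
    (hode t ht).continuousAt
  -- the key formula, valid while e stays positive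
  have formula : ∀ t : ℝ, 0 ≤ t → (∀ s ∈ Icc (0:ℝ) t, 0 < e s) →
      (e t) ^ (1 - α) = e₀ ^ (1 - α) - c * t := by
    intro t ht hpos
    have key : ∀ x ∈ Icc (0:ℝ) t,
        (fun s => (e s) ^ (1 - α) + c * s) x = (fun s => (e s) ^ (1 - α) + c * s) 0 := by
      apply constant_of_has_deriv_right_zero
      · intro x hx
        have hex : 0 < e x := hpos x hx
        have hcx : ContinuousAt (fun s => (e s) ^ (1 - α) + c * s) x := by
          exact (((Real.continuousAt_rpow_const _ _ (Or.inl hex.ne')).comp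
            (hcont x hx.1)).add (by fun_prop))
        exact hcx.continuousWithinAt
      · intro x hx
        have hx0 : 0 ≤ x := hx.1
        have hex : 0 < e x := hpos x ⟨hx.1, hx.2.le⟩
        have h1 : HasDerivAt (fun y : ℝ => y ^ (1 - α))
            ((1 - α) * (e x) ^ (1 - α - 1)) (e x) :=
          Real.hasDerivAt_rpow_const (Or.inl hex.ne')
        have h2 := (h1.comp x (hode x hx0))
        have h3 : HasDerivAt (fun s => (e s) ^ (1 - α)) (-c) x := by
          refine h2.congr_deriv ?_
          symm
          rw [Real.sign_of_pos hex, abs_of_pos hex, hc]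
          have : (e x) ^ (1 - α - 1) * (e x) ^ α = 1 := by
            rw [← Real.rpow_add hex]
            norm_num
          linear_combination (lam * (1 - α)) * this
        have h4 : HasDerivAt (fun s : ℝ => c * s) c x := by
          simpa using (hasDerivAt_id x).const_mul c
        have := h3.add h4
        simp only [neg_add_cancel] at this
        exact this.hasDerivWithinAt
    have := key t ⟨ht, le_refl t⟩
    simp only [hinit, mul_zero, add_zero] at this
    linarith [this]
  -- positivity on [0, tf)
  have pos : ∀ t ∈ Ico (0:ℝ) tf, 0 < e t := by
    by_contra hcon
    push_neg at hcon
    obtain ⟨s, hs, hsle⟩ := hcon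
    -- there is a zero in [0, s]
    have hconts : ContinuousOn e (Icc 0 s) := fun x hx =>
      (hcont x hx.1).continuousWithinAt
    have : (0:ℝ) ∈ Icc (e s) (e 0) := ⟨hsle, by rw [hinit]; exact he₀.le⟩
    obtain ⟨z, hz, hez⟩ := intermediate_value_Icc' hs.1 hconts this
    -- the zero set
    set Z : Set ℝ := {u | 0 ≤ u ∧ e u = 0} with hZ
    have hZne : Z.Nonempty := ⟨z, hz.1, hez⟩
    have hZbdd : BddBelow Z := ⟨0, fun u hu => hu.1⟩
    set t₁ : ℝ := sInf Z with ht₁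
    have ht₁0 : 0 ≤ t₁ := le_csInf hZne fun u hu => hu.1
    have ht₁z : t₁ ≤ z := csInf_le hZbdd ⟨hz.1, hez⟩
    have ht₁tf : t₁ < tf := lt_of_le_of_lt (ht₁z.trans hz.2) hs.2
    -- e t₁ = 0
    have het₁ : e t₁ = 0 := by
      have hcl : t₁ ∈ closure Z := csInf_mem_closure hZne hZbdd
      rw [mem_closure_iff_seq_limit] at hcl
      obtain ⟨x, hxZ, hxlim⟩ := hcl
      have h1 : Tendsto (fun n => e (x n)) atTop (𝓝 (e t₁)) :=
        ((hcont t₁ ht₁0).tendsto).comp hxlim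
      have h2 : Tendsto (fun n => e (x n)) atTop (𝓝 0) := by
        have : ∀ n, e (x n) = 0 := fun n => (hxZ n).2
        simp [this]
      exact tendsto_nhds_unique h1 h2
    have ht₁pos : 0 < t₁ := by
      rcases ht₁0.lt_or_eq with h | h
      · exact h
      · exfalso; rw [← h, hinit] at het₁; linarith
    -- e positive on [0, t₁)
    have hposlt : ∀ u ∈ Ico (0:ℝ) t₁, 0 < e u := by
      intro u hu
      by_contra hne
      push_neg at hne
      rcases hne.lt_or_eq with h | h
      · -- zero in [0, u] below t₁
        have hcu : ContinuousOn e (Icc 0 u) := fun x hx =>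
          (hcont x hx.1).continuousWithinAt
        have : (0:ℝ) ∈ Icc (e u) (e 0) := ⟨h.le, by rw [hinit]; exact he₀.le⟩
        obtain ⟨w, hw, hew⟩ := intermediate_value_Icc' hu.1 hcu this
        have : t₁ ≤ w := csInf_le hZbdd ⟨hw.1, hew⟩
        linarith [hw.2, hu.2]
      · have : t₁ ≤ u := csInf_le hZbdd ⟨hu.1, h⟩
        linarith [hu.2]
    -- formula on [0, t₁)
    have hform : ∀ u ∈ Ico (0:ℝ) t₁, (e u) ^ (1 - α) = e₀ ^ (1 - α) - c * u := by
      intro u hu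
      exact formula u hu.1 fun v hv => hposlt v ⟨hv.1, lt_of_le_of_lt hv.2 hu.2⟩
    -- take left limit at t₁
    have hL1 : Tendsto (fun u => (e u) ^ (1 - α)) (𝓝[<] t₁) (𝓝 ((e t₁) ^ (1 - α))) := by
      have : ContinuousAt (fun u => (e u) ^ (1 - α)) t₁ :=
        (Real.continuousAt_rpow_const _ _ (Or.inr h1α.le)).comp (hcont t₁ ht₁0)
      exact this.continuousWithinAt.tendsto
    have hL2 : Tendsto (fun u => e₀ ^ (1 - α) - c * u) (𝓝[<] t₁)
        (𝓝 (e₀ ^ (1 - α) - c * t₁)) := by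
      exact ((continuous_const.sub (continuous_const.mul continuous_id)).tendsto t₁).mono_left
        nhdsWithin_le_nhds
    have heq : (e t₁) ^ (1 - α) = e₀ ^ (1 - α) - c * t₁ := by
      refine tendsto_nhds_unique (hL1.congr' ?_) hL2
      filter_upwards [Ioo_mem_nhdsLT_of_mem (⟨ht₁pos, le_refl t₁⟩ : t₁ ∈ Ioc 0 t₁)]
        with u hu
      exact hform u ⟨hu.1.le, hu.2⟩
    rw [het₁, Real.zero_rpow h1α.ne'] at heq
    have : t₁ = tf := by
      have : c * t₁ = c * tf := by rw [hctf]; linarith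
      exact mul_left_cancel₀ hcpos.ne' this
    linarith
  refine ⟨pos, ?_⟩
  -- now show e tf = 0
  rcases lt_trichotomy (e tf) 0 with h | h | h
  · -- impossible: IVT gives zero before tf
    exfalso
    have hcu : ContinuousOn e (Icc 0 tf) := fun x hx =>
      (hcont x hx.1).continuousWithinAt
    have : (0:ℝ) ∈ Icc (e tf) (e 0) := ⟨h.le, by rw [hinit]; exact he₀.le⟩
    obtain ⟨w, hw, hew⟩ := intermediate_value_Icc' htfpos.le hcu this
    have hwtf : w < tf := lt_of_le_of_ne hw.2 (fun hh => by rw [hh] at hew; linarith)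
    exact absurd hew (pos w ⟨hw.1, hwtf⟩).ne'
  · exact h
  · exfalso
    have hposall : ∀ s ∈ Icc (0:ℝ) tf, 0 < e s := by
      intro s hs
      rcases hs.2.lt_or_eq with h' | h'
      · exact pos s ⟨hs.1, h'⟩
      · rwa [h']
    have := formula tf htfpos.le hposall
    rw [← hctf] at this
    have h0 : (e tf) ^ (1 - α) = 0 := by linarith
    exact absurd h0 (Real.rpow_pos_of_pos h _).ne'

/-- For a nonzero initial error, `t_f = λ⁻¹(1−α)⁻¹|e₀|^{1−α}` is exactly the
first time the terminal sliding mode trajectory reaches zero. -/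
theorem terminal_sliding_exact_reaching_time
    (lam α e₀ : ℝ) (hlam : 0 < lam) (hα : α ∈ Set.Ioo (1 / 2 : ℝ) 1)
    (he₀ : e₀ ≠ 0)
    (e : ℝ → ℝ) (hinit : e 0 = e₀)
    (hode : ∀ t : ℝ, 0 ≤ t →
      HasDerivAt e (-lam * |e t| ^ α * Real.sign (e t)) t) :
    (∀ t : ℝ, t ∈ Set.Ico 0 (lam⁻¹ * (1 - α)⁻¹ * |e₀| ^ (1 - α)) → e t ≠ 0) ∧
    e (lam⁻¹ * (1 - α)⁻¹ * |e₀| ^ (1 - α)) = 0 := by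
  rcases he₀.lt_or_gt with h | h
  · -- negative case: apply aux to -e
    have hode' : ∀ t : ℝ, 0 ≤ t →
        HasDerivAt (fun s => -e s) (-lam * |(-e t)| ^ α * Real.sign (-e t)) t := by
      intro t ht
      have := (hode t ht).neg
      refine this.congr_deriv ?_
      symm
      rw [abs_neg, Real.sign_neg]
      ring
    have := tsm_aux lam α (-e₀) hlam hα (by linarith) (fun s => -e s)
      (by simp [hinit]) hode'
    rw [abs_neg] at this
    exact ⟨fun t ht => by have := this.1 t ht; simp at this ⊢; linarith,
      by have := this.2; simp at this; linarith⟩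
  · have := tsm_aux lam α e₀ hlam hα h e hinit hode
    exact ⟨fun t ht => (this.1 t ht).ne', this.2⟩
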